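/- Let X and Y be Hausdorff topological spaces and f : X → Y a continuous, open, surjective map such that every fibre has at most n elements. Then X and Y have the same Cantor-Bendixson rank. -/

import Mathlib

open Filter Topology

/-- The `o`-th Cantor–Bendixson derivative of the space `X`: at successors remove isolated
points (keep only accumulation points), at limits take intersections. -/
noncomputable def cbDeriv (X : Type*) [TopologicalSpace X] (o : Ordinal) : Set X :=
  Ordinal.limitRecOn o Set.univ
    (fun _ s => {x | x ∈ s ∧ AccPt x (𝓟 s)})
    (fun o _ ih => ⋂ (o' : Ordinal) (h : o' < o), ih o' h)

lemma cbDeriv_zero (X : Type*) [TopologicalSpace X] : cbDeriv X 0 = Set.univ :=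
  Ordinal.limitRecOn_zero ..

lemma cbDeriv_succ (X : Type*) [TopologicalSpace X] (o : Ordinal) :
    cbDeriv X (Order.succ o) =
      {x | x ∈ cbDeriv X o ∧ AccPt x (𝓟 (cbDeriv X o))} :=
  Ordinal.limitRecOn_succ ..

lemma cbDeriv_limit (X : Type*) [TopologicalSpace X] {o : Ordinal} (ho : Order.IsSuccLimit o) :
    cbDeriv X o = ⋂ (o' : Ordinal) (_ : o' < o), cbDeriv X o' :=
  Ordinal.limitRecOn_limit _ _ _ _ ho

/-- An open map pulls the Cantor–Bendixson derivative of the target back into the one of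
the source. -/
lemma preimage_cbDeriv_subset {X Y : Type*} [TopologicalSpace X] [TopologicalSpace Y]
    (f : X → Y) (hopen : IsOpenMap f) :
    ∀ o : Ordinal, f ⁻¹' (cbDeriv Y o) ⊆ cbDeriv X o := by
  intro o
  induction o using Ordinal.limitRecOn with
  | zero => simp [cbDeriv_zero]
  | add_one o ih =>
    rw [Ordinal.add_one_eq_succ]
    intro x hx
    rw [cbDeriv_succ] at hx ⊢
    obtain ⟨hY, hacc⟩ := hx
    refine ⟨ih hY, ?_⟩
    rw [accPt_iff_nhds] at hacc ⊢
    intro U hU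
    obtain ⟨W, hWU, hWopen, hxW⟩ := mem_nhds_iff.mp hU
    obtain ⟨y', ⟨hy'W, hy'D⟩, hy'ne⟩ :=
      hacc (f '' W) ((hopen W hWopen).mem_nhds ⟨x, hxW, rfl⟩)
    obtain ⟨w, hwW, rfl⟩ := hy'W
    exact ⟨w, ⟨hWU hwW, ih hy'D⟩, fun h => hy'ne (by rw [h])⟩
  | limit o ho ih =>
    intro x hx
    rw [cbDeriv_limit _ ho] at hx ⊢
    simp only [Set.mem_preimage, Set.mem_iInter] at hx ⊢
    exact fun o' h => ih o' h (hx o' h)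

/-- A continuous map with finite fibres from a Hausdorff space maps the Cantor–Bendixson
derivative of the source into the one of the target. -/
lemma cbDeriv_subset_preimage {X Y : Type*} [TopologicalSpace X] [TopologicalSpace Y]
    [T2Space X] (f : X → Y) (hcont : Continuous f)
    (hfib : ∀ y : Y, (f ⁻¹' {y}).Finite) :
    ∀ o : Ordinal, cbDeriv X o ⊆ f ⁻¹' (cbDeriv Y o) := by
  intro o
  induction o using Ordinal.limitRecOn with
  | zero => simp [cbDeriv_zero]
  | add_one o ih =>
    rw [Ordinal.add_one_eq_succ]
    intro x hx
    rw [cbDeriv_succ] at hx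
    obtain ⟨hX, hacc⟩ := hx
    have hfx : f x ∈ cbDeriv Y o := ih hX
    have : f x ∈ {y | y ∈ cbDeriv Y o ∧ AccPt y (𝓟 (cbDeriv Y o))} := by
      refine ⟨hfx, ?_⟩
      rw [accPt_iff_nhds] at hacc ⊢
      intro V hV
      -- exclude the other (finitely many) points of the fibre of `f x`
      have hTfin : (f ⁻¹' {f x} \ {x}).Finite := (hfib (f x)).subset Set.diff_subset
      have hTclosed : IsClosed (f ⁻¹' {f x} \ {x}) := hTfin.isClosed
      have hU : f ⁻¹' V ∩ (f ⁻¹' {f x} \ {x})ᶜ ∈ 𝓝 x := by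
        refine Filter.inter_mem (hcont.continuousAt.preimage_mem_nhds hV) ?_
        refine hTclosed.isOpen_compl.mem_nhds ?_
        simp
      obtain ⟨x', ⟨⟨hx'V, hx'T⟩, hx'X⟩, hx'ne⟩ := hacc _ hU
      refine ⟨f x', ⟨hx'V, ih hx'X⟩, ?_⟩
      intro h
      exact hx'T ⟨h, hx'ne⟩
    rwa [Set.mem_preimage, cbDeriv_succ]
  | limit o ho ih =>
    intro x hx
    rw [cbDeriv_limit _ ho] at hx
    rw [Set.mem_preimage, cbDeriv_limit _ ho]
    simp only [Set.mem_iInter] at hx ⊢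
    exact fun o' h => ih o' h (hx o' h)

/-- If `f : X → Y` is continuous, open and onto with fibres of size at most `n`, then `X` and
`Y` have the same Cantor–Bendixson rank: their `o`-th derivatives vanish simultaneously. -/
theorem stmt_8 {X Y : Type*} [TopologicalSpace X] [TopologicalSpace Y]
    [T2Space X] [T2Space Y] (f : X → Y) (n : ℕ) (hcont : Continuous f)
    (hopen : IsOpenMap f) (hsurj : Function.Surjective f)
    (hfib : ∀ y : Y, (f ⁻¹' {y}).Finite ∧ (f ⁻¹' {y}).ncard ≤ n) :
    ∀ o : Ordinal, ((cbDeriv X o).Nonempty ↔ (cbDeriv Y o).Nonempty) := by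
  intro o
  constructor
  · rintro ⟨x, hx⟩
    exact ⟨f x, cbDeriv_subset_preimage f hcont (fun y => (hfib y).1) o hx⟩
  · rintro ⟨y, hy⟩
    obtain ⟨x, rfl⟩ := hsurj y
    exact ⟨x, preimage_cbDeriv_subset f hopen o hy⟩
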